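/- Let x^t and x^{t+1} be consecutive iterates of the simplex method with the largest distance rule applied to min c^⊤x s.t. Ax = b, x ≥ 0, and suppose x^t ≠ x^{t+1}. Let δ and γ be the minimum and maximum positive components over all basic feasible solutions, β = (min_j ‖a_j‖)/(max_j ‖a_j‖), and z* the optimal value. Then c^⊤x^{t+1} − z* ≤ (1 − βδ/(mγ)) (c^⊤x^t − z*). -/

import Mathlib

open Matrix Finset

/-- The Euclidean norm of the `j`-th column of `A`. -/
noncomputable def colNorm {m n : ℕ} (A : Matrix (Fin m) (Fin n) ℝ) (j : Fin n) : ℝ :=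
  Real.sqrt (∑ i, A i j ^ 2)

/-- `bas` selects an invertible `m × m` submatrix of `A` (a basis). -/
def IsBasis {m n : ℕ} (A : Matrix (Fin m) (Fin n) ℝ) (bas : Fin m → Fin n) : Prop :=
  Function.Injective bas ∧ IsUnit (A.submatrix id bas)

/-- `x` is a basic feasible solution of `A x = b`, `x ≥ 0`. -/
def IsBasicFeasible {m n : ℕ} (A : Matrix (Fin m) (Fin n) ℝ) (b : Fin m → ℝ)
    (x : Fin n → ℝ) : Prop :=
  (∃ bas : Fin m → Fin n, IsBasis A bas ∧ ∀ j, j ∉ Set.range bas → x j = 0) ∧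
    A *ᵥ x = b ∧ 0 ≤ x

/-- Lemma 2 of the paper: one pivot of the simplex method with the largest distance rule,
moving from BFS `x` (basis `bas`) to a different feasible solution `x'`, shrinks the
optimality gap by the factor `1 − βδ/(mγ)`, where `δ`/`γ` are the min/max positive
components over all BFSs, `β = (min_j ‖a_j‖)/(max_j ‖a_j‖)`, and `z*` is the optimal
value (attained by primal and dual optimal basic solutions). -/
theorem largest_distance_gap_decrease {m n : ℕ} [NeZero n] (hm : 0 < m) (hmn : m < n)
    (A : Matrix (Fin m) (Fin n) ℝ) (b : Fin m → ℝ) (c : Fin n → ℝ)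
    (hcols : ∀ j : Fin n, ∃ i : Fin m, A i j ≠ 0)
    (bas : Fin m → Fin n) (hbas : IsBasis A bas)
    (x : Fin n → ℝ)
    (hxzero : ∀ j, j ∉ Set.range bas → x j = 0)
    (hxfeas : A *ᵥ x = b) (hx0 : 0 ≤ x)
    (y : Fin m → ℝ)
    (hy : (A.submatrix id bas)ᵀ *ᵥ y = fun i => c (bas i))
    (jl : Fin n) (hjl : jl ∉ Set.range bas)
    (hsomeneg : ∃ j, j ∉ Set.range bas ∧ c j - (Aᵀ *ᵥ y) j < 0)
    (hmin : ∀ j, j ∉ Set.range bas →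
      (c jl - (Aᵀ *ᵥ y) jl) / colNorm A jl ≤ (c j - (Aᵀ *ᵥ y) j) / colNorm A j)
    (x' : Fin n → ℝ)
    (hx'feas : A *ᵥ x' = b) (hx'0 : 0 ≤ x')
    (hx'zero : ∀ j, j ∉ Set.range bas → j ≠ jl → x' j = 0)
    (hx'bfs : IsBasicFeasible A b x')
    (hne : x' ≠ x)
    (δ γ : ℝ) (hδ : 0 < δ)
    (hδγ : ∀ v, IsBasicFeasible A b v → ∀ j, 0 < v j → δ ≤ v j ∧ v j ≤ γ)
    (zstar : ℝ)
    (hzatt : ∃ v, IsBasicFeasible A b v ∧ c ⬝ᵥ v = zstar)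
    (hzopt : ∀ v, A *ᵥ v = b → 0 ≤ v → zstar ≤ c ⬝ᵥ v)
    (hdual : ∃ (y' : Fin m → ℝ) (s : Fin n → ℝ),
      Aᵀ *ᵥ y' + s = c ∧ 0 ≤ s ∧ b ⬝ᵥ y' = zstar) :
    c ⬝ᵥ x' - zstar ≤
      (1 - ((Finset.univ.inf' Finset.univ_nonempty fun j => colNorm A j) /
          (Finset.univ.sup' Finset.univ_nonempty fun j => colNorm A j)) * δ / (m * γ)) *
        (c ⬝ᵥ x - zstar) := by
  classical
  obtain ⟨hbasinj, hBunit⟩ := hbas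
  have hvbfs' := hzatt
  have hNpos : ∀ j, 0 < colNorm A j := by
    intro j
    obtain ⟨i, hi⟩ := hcols j
    have h1 : (0:ℝ) < ∑ k, A k j ^ 2 :=
      lt_of_lt_of_le (by positivity)
        (Finset.single_le_sum (fun k _ => sq_nonneg _) (Finset.mem_univ i))
    exact Real.sqrt_pos.mpr h1
  set cbar : Fin n → ℝ := fun j => c j - (Aᵀ *ᵥ y) j with hcbar
  have hcb : ∀ j, c j - (Aᵀ *ᵥ y) j = cbar j := fun _ => rfl
  simp only [hcb] at hmin hsomeneg
  have hcbas : ∀ i, cbar (bas i) = 0 := by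
    intro i
    have h := congrFun hy i
    simp only [Matrix.mulVec, dotProduct, Matrix.transpose_apply, Matrix.submatrix_apply,
      id] at h
    simp only [hcbar, Matrix.mulVec, dotProduct, Matrix.transpose_apply]
    linarith
  have hdotc : ∀ w : Fin n → ℝ, A *ᵥ w = b → c ⬝ᵥ w = cbar ⬝ᵥ w + y ⬝ᵥ b := by
    intro w hw
    have h1 : (Aᵀ *ᵥ y) ⬝ᵥ w = y ⬝ᵥ b := by
      rw [Matrix.mulVec_transpose, ← Matrix.dotProduct_mulVec, hw]
    have h2 : c ⬝ᵥ w = cbar ⬝ᵥ w + (Aᵀ *ᵥ y) ⬝ᵥ w := by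
      have h3 : ∀ j, c j * w j = cbar j * w j + (Aᵀ *ᵥ y) j * w j := fun j => by
        rw [← hcb j]; ring
      simp only [dotProduct]
      rw [← Finset.sum_add_distrib]
      exact Finset.sum_congr rfl fun j _ => h3 j
    rw [h2, h1]
  have hxc : cbar ⬝ᵥ x = 0 := by
    show ∑ j, cbar j * x j = 0
    apply Finset.sum_eq_zero
    intro j _
    by_cases hj : j ∈ Set.range bas
    · obtain ⟨i, rfl⟩ := hj; rw [hcbas]; ring
    · rw [hxzero j hj]; ring
  have hx'c : cbar ⬝ᵥ x' = cbar jl * x' jl := by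
    show ∑ j, cbar j * x' j = _
    rw [Finset.sum_eq_single jl]
    · intro j _ hjne
      by_cases hj : j ∈ Set.range bas
      · obtain ⟨i, rfl⟩ := hj; rw [hcbas]; ring
      · rw [hx'zero j hj hjne]; ring
    · intro h; exact absurd (Finset.mem_univ jl) h
  have hstep : c ⬝ᵥ x' = c ⬝ᵥ x + cbar jl * x' jl := by
    rw [hdotc x' hx'feas, hdotc x hxfeas, hxc, hx'c]; ring
  obtain ⟨v, hvbfs, hvz⟩ := hzatt
  have hvbfs2 := hvbfs
  obtain ⟨⟨basv, ⟨hbasvinj, _⟩, hvzero⟩, hvfeas, hv0⟩ := hvbfs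
  have hgap : c ⬝ᵥ x - zstar = ∑ j, (-cbar j) * v j := by
    have h4 : ∑ j, (-cbar j) * v j = -(cbar ⬝ᵥ v) := by
      simp [dotProduct, neg_mul, Finset.sum_neg_distrib]
    rw [← hvz, hdotc x hxfeas, hdotc v hvfeas, hxc, h4]; ring
  -- x' jl is strictly positive
  have hx'jlpos : 0 < x' jl := by
    rcases lt_or_eq_of_le (hx'0 jl) with h | h
    · exact h
    · exfalso; apply hne
      have hxl0 : x' jl = 0 := by simpa using h.symm
      set u : Fin n → ℝ := x' - x with hu
      have hAu : A *ᵥ u = 0 := by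
        rw [hu, Matrix.mulVec_sub, hx'feas, hxfeas, sub_self]
      have huz : ∀ j, j ∉ Set.range bas → u j = 0 := by
        intro j hj
        by_cases hje : j = jl
        · rw [hje]; simp [hu, Pi.sub_apply, hxl0, hxzero jl hjl]
        · simp [hu, Pi.sub_apply, hx'zero j hj hje, hxzero j hj]
      have hB : (A.submatrix id bas) *ᵥ (fun k => u (bas k)) = 0 := by
        funext i
        have h0 := congrFun hAu i
        simp only [Matrix.mulVec, dotProduct, Matrix.submatrix_apply, id, Pi.zero_apply] at h0 ⊢
        have e1 : ∑ j, A i j * u j = ∑ j ∈ Finset.univ.image bas, A i j * u j := by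
          symm
          apply Finset.sum_subset (Finset.subset_univ _)
          intro j _ hjm
          have : j ∉ Set.range bas := by
            rintro ⟨k, hk⟩
            exact hjm (Finset.mem_image.mpr ⟨k, Finset.mem_univ k, hk⟩)
          rw [huz j this]; ring
        have e2 : ∑ j ∈ Finset.univ.image bas, A i j * u j
            = ∑ k, A i (bas k) * u (bas k) :=
          Finset.sum_image (fun a _ b _ hab => hbasinj hab)
        rw [← e2, ← e1, h0]
      have hinj : Function.Injective (A.submatrix id bas).mulVec :=
        Matrix.mulVec_injective_iff_isUnit.mpr hBunit
      have hub : (fun k => u (bas k)) = 0 := by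
        apply hinj
        rw [hB, Matrix.mulVec_zero]
      have hall : ∀ j, u j = 0 := by
        intro j
        by_cases hj : j ∈ Set.range bas
        · obtain ⟨k, rfl⟩ := hj; exact congrFun hub k
        · exact huz j hj
      funext j
      have := hall j
      simp only [hu, Pi.sub_apply] at this
      linarith
  obtain ⟨hδx', hx'γ⟩ := hδγ x' hx'bfs jl hx'jlpos
  have hγpos : 0 < γ := lt_of_lt_of_le hδ (le_trans hδx' hx'γ)
  -- the entering reduced cost is negative
  obtain ⟨j0, hj0nb, hj0neg⟩ := hsomeneg
  have hjlneg : cbar jl < 0 := by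
    have hj0' : cbar j0 / colNorm A j0 < 0 := div_neg_of_neg_of_pos hj0neg (hNpos j0)
    have hq : cbar jl / colNorm A jl < 0 := lt_of_le_of_lt (hmin j0 hj0nb) hj0'
    by_contra hc
    push_neg at hc
    have : 0 ≤ cbar jl / colNorm A jl := div_nonneg hc (hNpos jl).le
    linarith
  set mN := (Finset.univ.inf' Finset.univ_nonempty fun j => colNorm A j) with hmN
  set MN := (Finset.univ.sup' Finset.univ_nonempty fun j => colNorm A j) with hMN
  have hminN_le : ∀ j, mN ≤ colNorm A j := fun j => Finset.inf'_le _ (Finset.mem_univ j)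
  have hle_maxN : ∀ j, colNorm A j ≤ MN := fun j => Finset.le_sup' _ (Finset.mem_univ j)
  have hmNpos : 0 < mN := (Finset.lt_inf'_iff _).mpr fun j _ => hNpos j
  have hMNpos : 0 < MN := lt_of_lt_of_le (hNpos jl) (hle_maxN jl)
  have hmpos : (0:ℝ) < (m:ℝ) := by exact_mod_cast hm
  -- sum of components of an optimal BFS is at most m * γ
  have hvsum : ∑ j, v j ≤ (m:ℝ) * γ := by
    have h1 : ∑ j, v j = ∑ j ∈ Finset.univ.image basv, v j := by
      symm
      apply Finset.sum_subset (Finset.subset_univ _)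
      intro j _ hjm
      apply hvzero
      rintro ⟨k, hk⟩
      exact hjm (Finset.mem_image.mpr ⟨k, Finset.mem_univ k, hk⟩)
    have h2 : ∀ j, v j ≤ γ := by
      intro j
      rcases lt_or_eq_of_le (hv0 j) with h | h
      · exact (hδγ v hvbfs2 j h).2
      · rw [← h]; exact hγpos.le
    have h3 : ((Finset.univ.image basv).card : ℝ) ≤ (m:ℝ) := by
      have : (Finset.univ.image basv).card ≤ m :=
        le_trans Finset.card_image_le (by simp)
      exact_mod_cast this
    calc ∑ j, v j = ∑ j ∈ Finset.univ.image basv, v j := h1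
      _ ≤ (Finset.univ.image basv).card • γ :=
          Finset.sum_le_card_nsmul _ _ _ (fun j _ => h2 j)
      _ = ((Finset.univ.image basv).card : ℝ) * γ := nsmul_eq_mul _ _
      _ ≤ (m:ℝ) * γ := mul_le_mul_of_nonneg_right h3 hγpos.le
  -- key bound on the gap
  have hterm : ∀ j, (-cbar j) * v j * colNorm A jl ≤ ((-cbar jl) * MN) * v j := by
    intro j
    rcases lt_or_eq_of_le (hv0 j) with h | h
    · have hb : (-cbar j) * colNorm A jl ≤ (-cbar jl) * MN := by
        by_cases hj : j ∈ Set.range bas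
        · obtain ⟨i, rfl⟩ := hj
          rw [hcbas]
          have := mul_pos (neg_pos.mpr hjlneg) hMNpos
          nlinarith
        · have h3 := hmin j hj
          rw [div_le_div_iff₀ (hNpos jl) (hNpos j)] at h3
          have h4 := mul_le_mul_of_nonneg_left (hle_maxN j) (neg_pos.mpr hjlneg).le
          nlinarith
      calc (-cbar j) * v j * colNorm A jl = ((-cbar j) * colNorm A jl) * v j := by ring
        _ ≤ ((-cbar jl) * MN) * v j := mul_le_mul_of_nonneg_right hb h.le
    · rw [← h]; simp
  have key1 : (c ⬝ᵥ x - zstar) * colNorm A jl ≤ (-cbar jl) * MN * ((m:ℝ) * γ) := by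
    rw [hgap, Finset.sum_mul]
    calc ∑ j, (-cbar j) * v j * colNorm A jl
        ≤ ∑ j, ((-cbar jl) * MN) * v j := Finset.sum_le_sum fun j _ => hterm j
      _ = ((-cbar jl) * MN) * ∑ j, v j := by rw [Finset.mul_sum]
      _ ≤ (-cbar jl) * MN * ((m:ℝ) * γ) :=
          mul_le_mul_of_nonneg_left hvsum
            (mul_nonneg (by linarith) hMNpos.le)
  have hkey2 : c ⬝ᵥ x' - zstar ≤ (c ⬝ᵥ x - zstar) + cbar jl * δ := by
    have h5 : cbar jl * x' jl ≤ cbar jl * δ := mul_le_mul_of_nonpos_left hδx' hjlneg.le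
    linarith [hstep]
  have hG0 : 0 ≤ c ⬝ᵥ x - zstar := sub_nonneg.mpr (hzopt x hxfeas hx0)
  have hMpos : 0 < MN * ((m:ℝ) * γ) := mul_pos hMNpos (mul_pos hmpos hγpos)
  rw [← mul_le_mul_iff_of_pos_right hMpos]
  have hexp : (1 - mN / MN * δ / ((m:ℝ) * γ)) * (c ⬝ᵥ x - zstar) * (MN * ((m:ℝ) * γ))
      = (c ⬝ᵥ x - zstar) * (MN * ((m:ℝ) * γ)) - (c ⬝ᵥ x - zstar) * (mN * δ) := by
    field_simp
  rw [hexp]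
  have h6 : (c ⬝ᵥ x - zstar) * mN ≤ (c ⬝ᵥ x - zstar) * colNorm A jl :=
    mul_le_mul_of_nonneg_left (hminN_le jl) hG0
  have h7 := mul_le_mul_of_nonneg_right hkey2 hMpos.le
  have h8 := mul_le_mul_of_nonneg_right key1 hδ.le
  have h9 := mul_le_mul_of_nonneg_right h6 hδ.le
  nlinarith [h7, h8, h9]
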